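/- Every 2-decomposition tree of an n-element set with n ≥ 3 has at most 8n − 17 nodes. (In particular, for an n-vertex chain-decomposable bipartite graph G with n ≥ 3, any decomposition tree of G — which is a 2-decomposition tree of V(G) — has at most 8n − 17 nodes.) -/
import Mathlib


universe u

/-- A rooted binary tree in which every node `v` carries a finite set label `S(v)`
and every internal node has exactly two children. -/
inductive STree (α : Type u) : Type u where
  | leaf (s : Finset α) : STree α
  | node (s : Finset α) (l r : STree α) : STree α

namespace STree

/-- The label `S(v)` of the root of the (sub)tree. -/
def label {α : Type u} : STree α → Finset α
  | leaf s => s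
  | node s _ _ => s

/-- The number of leaves of the tree. -/
def numLeaves {α : Type u} : STree α → ℕ
  | leaf _ => 1
  | node _ l r => l.numLeaves + r.numLeaves

/-- The total number of nodes of the tree. -/
def numNodes {α : Type u} : STree α → ℕ
  | leaf _ => 1
  | node _ l r => l.numNodes + r.numNodes + 1

/-- The local conditions of a `k`-decomposition tree: leaves are exactly the nodes whose
label is a singleton, and whenever `v₁, v₂` are the two children of `v` we have
`S(v₁) ∪ S(v₂) = S(v)`, `|S(v)| ≤ |S(v₁)| + |S(v₂)| ≤ |S(v)| + k`, and each of
`S(v₁) ∖ S(v₂)` and `S(v₂) ∖ S(v₁)` is non-empty. -/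
def Valid {α : Type u} [DecidableEq α] (k : ℕ) : STree α → Prop
  | leaf s => s.card = 1
  | node s l r =>
      s.card ≠ 1 ∧
      l.label ∪ r.label = s ∧
      s.card ≤ l.label.card + r.label.card ∧
      l.label.card + r.label.card ≤ s.card + k ∧
      (l.label \ r.label).Nonempty ∧ (r.label \ l.label).Nonempty ∧
      l.Valid k ∧ r.Valid k

/-- No node of the tree has label `A`. -/
def NoLabel {α : Type u} (A : Finset α) : STree α → Prop
  | leaf s => s ≠ A
  | node s l r => s ≠ A ∧ l.NoLabel A ∧ r.NoLabel A

/-- No node other than the root has label `A`. -/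
def NoLabelBelowRoot {α : Type u} (A : Finset α) : STree α → Prop
  | leaf _ => True
  | node _ l r => l.NoLabel A ∧ r.NoLabel A

end STree

/-- `T` is a `k`-decomposition tree of the finite set `A`:  the root (and only the root)
is labelled by `A`, leaves are exactly the nodes labelled by singletons, and the labels of
the two children of any internal node `v` cover `S(v)`, satisfy
`|S(v)| ≤ |S(v₁)| + |S(v₂)| ≤ |S(v)| + k`, and each has a private element. -/
def IsKDecompTree {α : Type u} [DecidableEq α] (k : ℕ) (A : Finset α) (T : STree α) : Prop :=
  T.label = A ∧ T.Valid k ∧ T.NoLabelBelowRoot A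


def gBound (n : ℕ) : ℕ := if n ≤ 2 then n else 4 * n - 8

lemma STree.numNodes_succ {α : Type u} (T : STree α) : T.numNodes + 1 = 2 * T.numLeaves := by
  induction T with
  | leaf s => rfl
  | node s l r hl hr => simp [STree.numNodes, STree.numLeaves]; omega

lemma STree.valid_card_pos {α : Type u} [DecidableEq α] {k : ℕ} (T : STree α)
    (h : T.Valid k) : 1 ≤ T.label.card := by
  cases T with
  | leaf s => simp [STree.Valid] at h; simp [STree.label, h]
  | node s l r =>
    obtain ⟨-, hunion, -, -, -, ⟨x, hx⟩, -, -⟩ := h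
    have : x ∈ s := by
      rw [← hunion]; exact Finset.mem_union_right _ (Finset.mem_sdiff.mp hx).1
    simpa [STree.label] using Finset.card_pos.mpr ⟨x, this⟩

lemma gBound_add {a b n : ℕ} (ha : 1 ≤ a) (hb : 1 ≤ b) (ha' : a < n) (hb' : b < n)
    (h1 : n ≤ a + b) (h2 : a + b ≤ n + 2) : gBound a + gBound b ≤ gBound n := by
  unfold gBound; split_ifs <;> omega

lemma STree.numLeaves_le {α : Type u} [DecidableEq α] (T : STree α)
    (h : T.Valid 2) : T.numLeaves ≤ gBound T.label.card := by
  induction T with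
  | leaf s => simp [STree.Valid] at h; simp [STree.numLeaves, STree.label, h, gBound]
  | node s l r ihl ihr =>
    obtain ⟨hne, hunion, hlow, hhigh, ⟨x, hx⟩, ⟨y, hy⟩, hvl, hvr⟩ := h
    have hxl := Finset.mem_sdiff.mp hx
    have hyr := Finset.mem_sdiff.mp hy
    have hsubl : l.label ⊆ s := by rw [← hunion]; exact Finset.subset_union_left
    have hsubr : r.label ⊆ s := by rw [← hunion]; exact Finset.subset_union_right
    have hlt_l : l.label.card < s.card :=
      Finset.card_lt_card ((Finset.ssubset_iff_of_subset hsubl).mpr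
        ⟨y, hsubr hyr.1, hyr.2⟩)
    have hlt_r : r.label.card < s.card :=
      Finset.card_lt_card ((Finset.ssubset_iff_of_subset hsubr).mpr
        ⟨x, hsubl hxl.1, hxl.2⟩)
    have hpl := STree.valid_card_pos l hvl
    have hpr := STree.valid_card_pos r hvr
    have := gBound_add hpl hpr hlt_l hlt_r hlow hhigh
    calc (STree.node s l r).numLeaves = l.numLeaves + r.numLeaves := rfl
      _ ≤ gBound l.label.card + gBound r.label.card := Nat.add_le_add (ihl hvl) (ihr hvr)
      _ ≤ gBound s.card := this

/-- Every `2`-decomposition tree of an `n`-element set with `n ≥ 3` has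
at most `8 * n - 17` nodes. -/
theorem twoDecompTree_numNodes_le {α : Type u} [DecidableEq α] (A : Finset α)
    (T : STree α) (hT : IsKDecompTree 2 A T) (hn : 3 ≤ A.card) :
    T.numNodes ≤ 8 * A.card - 17 := by
  obtain ⟨hlab, hval, -⟩ := hT
  have h1 := T.numNodes_succ
  have h2 := T.numLeaves_le hval
  rw [hlab] at h2
  have : gBound A.card = 4 * A.card - 8 := by unfold gBound; split_ifs <;> omega
  omega
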